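/- (Quadratic upper bound on the KL divergence between softmax distributions.) Let V be a nonempty finite type and softmax z i := Real.exp (z i) / ∑_{j ∈ V} Real.exp (z j). Then for all a b : V → ℝ, KL(softmax a ‖ softmax b) ≤ (1/4) * ∑_{i ∈ V} (a i − b i)². -/

import Mathlib

open Finset Real

lemma var_le_half_sq {V : Type*} [Fintype V] [Nonempty V] (w v : V → ℝ)
    (hw : ∀ i, 0 ≤ w i) (hsum : ∑ i, w i = 1) :
    ∑ i, w i * v i ^ 2 - (∑ i, w i * v i) ^ 2 ≤ (1 / 2) * ∑ i, v i ^ 2 := by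
  classical
  obtain ⟨i0, -, hM⟩ := Finset.exists_max_image Finset.univ v ⟨Classical.arbitrary V, Finset.mem_univ _⟩
  obtain ⟨j0, -, hm⟩ := Finset.exists_min_image Finset.univ v ⟨Classical.arbitrary V, Finset.mem_univ _⟩
  set c := (v i0 + v j0) / 2 with hc
  set μ := ∑ i, w i * v i with hμ
  have h1 : ∑ i, w i * (v i - c) ^ 2 = ∑ i, w i * v i ^ 2 - 2 * c * μ + c ^ 2 := by
    have e : ∀ i ∈ Finset.univ, w i * (v i - c) ^ 2
        = w i * v i ^ 2 - 2 * c * (w i * v i) + c ^ 2 * w i := fun i _ => by ring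
    rw [Finset.sum_congr rfl e, Finset.sum_add_distrib, Finset.sum_sub_distrib,
      ← Finset.mul_sum, ← Finset.mul_sum, ← hμ, hsum, mul_one]
  have h2 : ∑ i, w i * v i ^ 2 - μ ^ 2 ≤ ∑ i, w i * (v i - c) ^ 2 := by
    rw [h1]; nlinarith [sq_nonneg (μ - c)]
  have h3 : ∑ i, w i * (v i - c) ^ 2 ≤ ((v i0 - v j0) / 2) ^ 2 := by
    calc ∑ i, w i * (v i - c) ^ 2 ≤ ∑ i, w i * ((v i0 - v j0) / 2) ^ 2 := by
          refine Finset.sum_le_sum fun i _ => ?_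
          have hmi := hm i (Finset.mem_univ i)
          have hMi := hM i (Finset.mem_univ i)
          refine mul_le_mul_of_nonneg_left ?_ (hw i)
          rw [hc]
          nlinarith [mul_nonneg (sub_nonneg.2 hmi) (sub_nonneg.2 hMi)]
      _ = ((v i0 - v j0) / 2) ^ 2 := by rw [← Finset.sum_mul, hsum, one_mul]
  have h4 : ((v i0 - v j0) / 2) ^ 2 ≤ (1 / 2) * ∑ i, v i ^ 2 := by
    by_cases hij : i0 = j0
    · have hnn : (0:ℝ) ≤ ∑ i, v i ^ 2 := Finset.sum_nonneg fun i _ => sq_nonneg _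
      rw [hij]
      simp
      linarith
    · have hsub : v i0 ^ 2 + v j0 ^ 2 ≤ ∑ i, v i ^ 2 := by
        have h := Finset.sum_le_sum_of_subset_of_nonneg
          (Finset.subset_univ ({i0, j0} : Finset V))
          (fun i _ _ => sq_nonneg (v i))
        rwa [Finset.sum_pair hij] at h
      nlinarith [sq_nonneg (v i0 + v j0)]
  linarith

/-- Quadratic upper bound on the KL divergence between softmax distributions: for all
`a b : V → ℝ`, `KL(softmax a ‖ softmax b) ≤ (1/4) * ∑ i, (a i − b i)²`. -/
theorem kl_softmax_le_quarter_sq_dist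
    {V : Type*} [Fintype V] [Nonempty V] (a b : V → ℝ) :
    ∑ i, (Real.exp (a i) / ∑ j, Real.exp (a j)) *
        Real.log ((Real.exp (a i) / ∑ j, Real.exp (a j)) /
          (Real.exp (b i) / ∑ j, Real.exp (b j))) ≤
      (1 / 4) * ∑ i, (a i - b i) ^ 2 := by
  set v : V → ℝ := fun i => b i - a i with hv
  set C : ℝ := (1 / 2) * ∑ i, v i ^ 2 with hC
  set S : ℝ → ℝ := fun t => ∑ i, Real.exp (a i + t * v i) with hS
  have hSpos : ∀ t, 0 < S t := fun t =>
    Finset.sum_pos (fun i _ => Real.exp_pos _) Finset.univ_nonempty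
  set F1 : ℝ → ℝ := fun t => ∑ i, v i * Real.exp (a i + t * v i) with hF1
  set F2 : ℝ → ℝ := fun t => ∑ i, v i ^ 2 * Real.exp (a i + t * v i) with hF2
  have hlin : ∀ i (t : ℝ), HasDerivAt (fun t : ℝ => a i + t * v i) (v i) t := by
    intro i t
    simpa using ((hasDerivAt_id t).mul_const (v i)).const_add (a i)
  have hSd : ∀ t, HasDerivAt S (F1 t) t := by
    intro t
    rw [hS, hF1]
    apply HasDerivAt.fun_sum
    intro i _
    simpa [mul_comm] using (hlin i t).exp
  have hF1d : ∀ t, HasDerivAt F1 (F2 t) t := by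
    intro t
    rw [hF1, hF2]
    apply HasDerivAt.fun_sum
    intro i _
    have := ((hlin i t).exp).const_mul (v i)
    refine this.congr_deriv ?_
    ring
  -- the second derivative of log ∘ S is bounded by C
  have hkey : ∀ t : ℝ, (F2 t * S t - F1 t * F1 t) / S t ^ 2 ≤ C := by
    intro t
    have hSne : S t ≠ 0 := (hSpos t).ne'
    have hvar := var_le_half_sq (fun i => Real.exp (a i + t * v i) / S t) v
      (fun i => by positivity)
      (by rw [← Finset.sum_div]; exact div_self hSne)
    have e1 : ∑ i, (Real.exp (a i + t * v i) / S t) * v i ^ 2 = F2 t / S t := by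
      rw [hF2, Finset.sum_div]; exact Finset.sum_congr rfl fun i _ => by ring
    have e2 : ∑ i, (Real.exp (a i + t * v i) / S t) * v i = F1 t / S t := by
      rw [hF1, Finset.sum_div]; exact Finset.sum_congr rfl fun i _ => by ring
    rw [e1, e2] at hvar
    have e3 : (F2 t * S t - F1 t * F1 t) / S t ^ 2 = F2 t / S t - (F1 t / S t) ^ 2 := by
      field_simp
    rw [e3]; exact hvar
  -- g := f' - C t is antitone
  have hGd : ∀ t, HasDerivAt (fun t => F1 t / S t)
      ((F2 t * S t - F1 t * F1 t) / S t ^ 2) t :=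
    fun t => (hF1d t).div (hSd t) (hSpos t).ne'
  have hg : Antitone (fun t => F1 t / S t - C * t) := by
    apply antitone_of_hasDerivAt_nonpos
      (f' := fun t => (F2 t * S t - F1 t * F1 t) / S t ^ 2 - C)
    · intro t
      simpa using (hGd t).fun_sub ((hasDerivAt_id t).const_mul C)
    · intro t
      simp only [Pi.zero_apply, sub_nonpos]
      exact hkey t
  have hg' : ∀ t : ℝ, 0 ≤ t → F1 t / S t - F1 0 / S 0 - C * t ≤ 0 := by
    intro t ht
    have := hg ht
    simp only [mul_zero, sub_zero] at this
    linarith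
  -- φ := log S - f'(0) t - C t²/2 is antitone on [0, ∞)
  have hφd : ∀ t, HasDerivAt (fun t => Real.log (S t) - F1 0 / S 0 * t - C * t ^ 2 / 2)
      (F1 t / S t - F1 0 / S 0 - C * t) t := by
    intro t
    have h1 : HasDerivAt (fun t => Real.log (S t)) (F1 t / S t) t :=
      (hSd t).log (hSpos t).ne'
    have h2 : HasDerivAt (fun t : ℝ => F1 0 / S 0 * t) (F1 0 / S 0) t := by
      simpa using (hasDerivAt_id t).const_mul (F1 0 / S 0)
    have h3 : HasDerivAt (fun t : ℝ => C * t ^ 2 / 2) (C * t) t := by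
      have := ((hasDerivAt_pow 2 t).const_mul C).div_const 2
      refine this.congr_deriv ?_
      ring
    exact (h1.sub h2).sub h3
  have hφ : AntitoneOn (fun t => Real.log (S t) - F1 0 / S 0 * t - C * t ^ 2 / 2)
      (Set.Ici (0:ℝ)) := by
    apply antitoneOn_of_hasDerivWithinAt_nonpos (convex_Ici 0)
      (f' := fun t => F1 t / S t - F1 0 / S 0 - C * t)
    · exact fun t _ => ((hφd t).continuousAt).continuousWithinAt
    · exact fun t ht => (hφd t).hasDerivWithinAt
    · intro t ht
      rw [interior_Ici] at ht
      exact hg' t (le_of_lt ht)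
  have hφ10 := hφ (Set.self_mem_Ici) (by norm_num : (1:ℝ) ∈ Set.Ici (0:ℝ)) zero_le_one
  simp only [mul_zero, mul_one, one_pow, sub_zero, zero_pow, mul_zero] at hφ10
  -- hφ10 : log (S 1) - F1 0 / S 0 - C / 2 ≤ log (S 0)
  -- identify S 0, S 1
  have hS0 : S 0 = ∑ j, Real.exp (a j) := by
    rw [hS]; exact Finset.sum_congr rfl fun i _ => by norm_num
  have hS1 : S 1 = ∑ j, Real.exp (b j) := by
    rw [hS]; refine Finset.sum_congr rfl fun i _ => ?_; rw [hv]; ring_nf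
  set A : ℝ := ∑ j, Real.exp (a j) with hA
  set B : ℝ := ∑ j, Real.exp (b j) with hB
  have hApos : 0 < A := by rw [← hS0]; exact hSpos 0
  have hBpos : 0 < B := by rw [← hS1]; exact hSpos 1
  -- compute the KL sum
  have hterm : ∀ i, (Real.exp (a i) / A) *
      Real.log ((Real.exp (a i) / A) / (Real.exp (b i) / B))
      = Real.exp (a i) / A * (a i - b i) + Real.exp (a i) / A * (Real.log B - Real.log A) := by
    intro i
    rw [Real.log_div (by positivity) (by positivity),
      Real.log_div (Real.exp_ne_zero _) hApos.ne',
      Real.log_div (Real.exp_ne_zero _) hBpos.ne',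
      Real.log_exp, Real.log_exp]
    ring
  have hsum1 : ∑ i, Real.exp (a i) / A = 1 := by
    rw [← Finset.sum_div, ← hA, div_self hApos.ne']
  have hKL : ∑ i, (Real.exp (a i) / A) *
      Real.log ((Real.exp (a i) / A) / (Real.exp (b i) / B))
      = -(F1 0 / A) + (Real.log B - Real.log A) := by
    rw [Finset.sum_congr rfl fun i _ => hterm i, Finset.sum_add_distrib,
      ← Finset.sum_mul, hsum1, one_mul]
    congr 1
    have hF10 : F1 0 = ∑ i, v i * Real.exp (a i) := by
      rw [hF1]; exact Finset.sum_congr rfl fun i _ => by norm_num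
    have e : ∀ i ∈ Finset.univ, Real.exp (a i) / A * (a i - b i)
        = -(v i * Real.exp (a i)) / A := fun i _ => by rw [hv]; ring
    rw [Finset.sum_congr rfl e, ← Finset.sum_div, Finset.sum_neg_distrib, hF10, neg_div]
  rw [hKL]
  have hRHS : (1 / 4 : ℝ) * ∑ i, (a i - b i) ^ 2 = C / 2 := by
    rw [hC, hv]
    rw [Finset.sum_congr rfl fun i _ => (by ring : (a i - b i)^2 = (b i - a i)^2)]
    ring
  rw [hRHS]
  rw [hS0, hS1] at hφ10
  norm_num at hφ10
  linarith
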